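/- Let r > q ≥ 1 and let V(z) be an r×q matrix whose entries are real polynomials such that V(z) is zeroless, i.e. for every z ∈ ℂ the evaluated matrix V(z) has full column rank q. Then there exists an r×r real polynomial matrix W(z) of finite degree such that: (a) every complex root z of det W(z) satisfies |z| > 1, and (b) W(z)·V(z) = V(0), the constant r×q matrix obtained by evaluating V at 0. -/

import Mathlib

open Polynomial Matrix

private lemma stmt2_aux_inj {r q : ℕ} (A : Matrix (Fin r) (Fin q) ℂ) (h : A.rank = q) :
    Function.Injective A.mulVec := by
  have h2 := LinearMap.finrank_range_add_finrank_ker A.mulVecLin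
  rw [Module.finrank_fintype_fun_eq_card, Fintype.card_fin] at h2
  rw [Matrix.rank] at h
  rw [h] at h2
  have h3 : Module.finrank ℂ (LinearMap.ker A.mulVecLin) = 0 := by omega
  have h4 : LinearMap.ker A.mulVecLin = ⊥ := Submodule.finrank_eq_zero.mp h3
  have := LinearMap.ker_eq_bot.mp h4
  exact this

private lemma stmt2_prime_step {r q : ℕ} (V : Matrix (Fin r) (Fin q) (Polynomial ℝ))
    (hV : ∀ z : ℂ, Function.Injective ((V.map (aeval z)).mulVec))
    {p : Polynomial ℝ} (hp : Prime p) (c : Fin q → Polynomial ℝ) (y : Fin r → Polynomial ℝ)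
    (h : V.mulVec c = p • y) : ∃ d, V.mulVec d = y := by
  have hdeg : 0 < (p.map (algebraMap ℝ ℂ)).degree := by
    rw [Polynomial.degree_map]
    rcases lt_or_ge 0 p.degree with h' | h'
    · exact h'
    · exact absurd (Polynomial.isUnit_iff_degree_eq_zero.mpr
        (le_antisymm h' (Polynomial.zero_le_degree_iff.mpr hp.ne_zero))) hp.not_unit
  obtain ⟨z₀, hz₀⟩ := Complex.exists_root hdeg
  have hz : aeval z₀ p = 0 := by
    rwa [Polynomial.aeval_def, ← Polynomial.eval_map]
  have hc0 : ∀ j, aeval z₀ (c j) = 0 := by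
    have h1 : (V.map (aeval z₀)).mulVec (fun j => aeval z₀ (c j)) = 0 := by
      funext i
      have := congrArg (aeval z₀) (congrFun h i)
      rw [(by simpa [Function.comp_def] using (RingHom.map_mulVec
        ((aeval z₀ : Polynomial ℝ →ₐ[ℝ] ℂ) : Polynomial ℝ →+* ℂ) V c i).symm :
        (V.map (aeval z₀)).mulVec (fun j => aeval z₀ (c j)) i = aeval z₀ (V.mulVec c i)), this]
      simp [Pi.smul_apply, hz]
    have h2 : (fun j => aeval z₀ (c j)) = (0 : Fin q → ℂ) := hV z₀ (by simp [h1])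
    intro j; exact congrFun h2 j
  have hdvd : ∀ j, p ∣ c j := by
    intro j
    by_contra hnd
    obtain ⟨a, b, hab⟩ := (hp.coprime_iff_not_dvd.mpr hnd)
    have := congrArg (aeval z₀) hab
    simp [hz, hc0 j] at this
  choose d hd using hdvd
  refine ⟨d, ?_⟩
  have h3 : V.mulVec (fun j => p * d j) = p • y := by
    have hc : (fun j => p * d j) = c := by funext j; exact (hd j).symm
    rw [hc, h]
  have h4 : p • V.mulVec d = p • y := by
    rw [← h3]; funext i
    simp [Matrix.mulVec, dotProduct, Finset.mul_sum, mul_left_comm]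
  funext i
  have := congrFun h4 i
  simp only [Pi.smul_apply, smul_eq_mul] at this
  exact mul_left_cancel₀ hp.ne_zero this

private lemma stmt2_V_inj {r q : ℕ} (V : Matrix (Fin r) (Fin q) (Polynomial ℝ))
    (hV : ∀ z : ℂ, Function.Injective ((V.map (aeval z)).mulVec)) :
    Function.Injective V.mulVecLin := by
  rw [← LinearMap.ker_eq_bot, LinearMap.ker_eq_bot']
  intro c hc
  simp only [Matrix.mulVecLin_apply] at hc
  funext j
  have hz : ∀ z : ℂ, aeval z (c j) = 0 := by
    intro z
    have h1 : (V.map (aeval z)).mulVec (fun j => aeval z (c j)) = 0 := by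
      funext i
      have h0 := congrFun hc i
      have := (RingHom.map_mulVec ((aeval z : Polynomial ℝ →ₐ[ℝ] ℂ) : Polynomial ℝ →+* ℂ) V c i)
      simp only [h0] at this
      simpa [Function.comp_def] using this.symm
    have h2 : (fun j => aeval z (c j)) = (0 : Fin q → ℂ) := hV z (by simp [h1])
    exact congrFun h2 j
  have heval : ∀ x : ℝ, (c j).eval x = 0 := by
    intro x
    have h := hz (x : ℂ)
    have h2 : algebraMap ℝ ℂ ((c j).eval x) = 0 := by
      rw [← Polynomial.eval₂_at_apply]
      rw [Polynomial.aeval_def] at h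
      exact h
    simpa using h2
  have : c j = 0 := by
    apply Polynomial.funext
    intro x; simp [heval x]
  simp [this]

/-- **Proposition 1(I) (Anderson–Deistler).** A tall (`r × q`, `r > q`) real polynomial
matrix `V(z)` that is zeroless (full column rank `q` at every `z ∈ ℂ`) admits a
finite-degree stable left inverse: an `r × r` polynomial matrix `W(z)` with all roots of
`det W(z)` outside the closed unit disc and `W(z) V(z) = V(0)`. -/
theorem stmt_2 (r q : ℕ) (hq : 1 ≤ q) (hrq : q < r)
    (V : Matrix (Fin r) (Fin q) (Polynomial ℝ))
    (hzl : ∀ z : ℂ, (V.map (Polynomial.aeval z)).rank = q) :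
    ∃ W : Matrix (Fin r) (Fin r) (Polynomial ℝ),
      (∀ z : ℂ, Polynomial.aeval z W.det = 0 → 1 < ‖z‖) ∧
      W * V = V.map (fun v => Polynomial.C (v.eval 0)) := by
  classical
  have hV : ∀ z : ℂ, Function.Injective ((V.map (aeval z)).mulVec) :=
    fun z => stmt2_aux_inj _ (hzl z)
  set f : (Fin q → ℝ[X]) →ₗ[ℝ[X]] (Fin r → ℝ[X]) := V.mulVecLin with hf
  set N : Submodule ℝ[X] (Fin r → ℝ[X]) := LinearMap.range f with hN
  have hfinj : Function.Injective f := stmt2_V_inj V hV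
  -- torsion-freeness of the quotient
  have key : ∀ p : ℝ[X], p ≠ 0 → ∀ y, p • y ∈ N → y ∈ N := by
    intro p
    refine UniqueFactorizationMonoid.induction_on_prime p ?_ ?_ ?_
    · intro h; exact absurd rfl h
    · intro u hu _ y hy
      obtain ⟨v, hv⟩ := hu.exists_left_inv
      have : y = v • (u • y) := by rw [smul_smul, hv, one_smul]
      rw [this]
      exact N.smul_mem v hy
    · intro a p ha hp IH _ y hy
      rw [mul_smul] at hy
      obtain ⟨c, hc⟩ := hy
      obtain ⟨d, hd⟩ := stmt2_prime_step V hV hp c (a • y) (by simpa [hf] using hc)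
      exact IH ha y ⟨d, by simpa [hf] using hd⟩
  haveI : NoZeroSMulDivisors ℝ[X] ((Fin r → ℝ[X]) ⧸ N) := by
    constructor
    intro p x hpx
    by_cases hp : p = 0
    · exact Or.inl hp
    · right
      obtain ⟨y, rfl⟩ := Submodule.Quotient.mk_surjective N x
      rw [← Submodule.Quotient.mk_smul, Submodule.Quotient.mk_eq_zero] at hpx
      rw [Submodule.Quotient.mk_eq_zero]
      exact key p hp y hpx
  haveI : Module.Free ℝ[X] ((Fin r → ℝ[X]) ⧸ N) :=
    (Module.free_iff_isTorsionFree).mpr inferInstance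
  -- splitting
  obtain ⟨s, hs⟩ := Module.projective_lifting_property N.mkQ
    (LinearMap.id : ((Fin r → ℝ[X]) ⧸ N) →ₗ[ℝ[X]] ((Fin r → ℝ[X]) ⧸ N))
    (Submodule.mkQ_surjective N)
  have hsid : ∀ x, N.mkQ (s x) = x := by
    intro x
    have := LinearMap.ext_iff.mp hs x
    simpa using this
  -- the equivalence
  set φ : ((Fin q → ℝ[X]) × ((Fin r → ℝ[X]) ⧸ N)) →ₗ[ℝ[X]] (Fin r → ℝ[X]) := f.coprod s with hφ
  have hφinj : Function.Injective φ := by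
    rw [← LinearMap.ker_eq_bot, LinearMap.ker_eq_bot']
    rintro ⟨c, x⟩ hcx
    simp only [hφ, LinearMap.coprod_apply] at hcx
    have hx : x = 0 := by
      have := congrArg N.mkQ hcx
      rw [map_add, hsid] at this
      have hfc : N.mkQ (f c) = 0 := by
        rw [Submodule.mkQ_apply, Submodule.Quotient.mk_eq_zero]
        exact ⟨c, rfl⟩
      rw [hfc, zero_add, map_zero] at this
      exact this
    have hc : c = 0 := by
      apply hfinj
      rw [hx, map_zero, add_zero] at hcx
      rw [hcx, map_zero]
    rw [hx, hc]
    rfl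
  have hφsurj : Function.Surjective φ := by
    intro x
    have hmem : x - s (N.mkQ x) ∈ N := by
      rw [← Submodule.Quotient.mk_eq_zero, ← Submodule.mkQ_apply, map_sub, hsid, sub_self]
    obtain ⟨c, hc⟩ := hmem
    exact ⟨(c, N.mkQ x), by simp only [hφ, LinearMap.coprod_apply, hc]; abel⟩
  set e : ((Fin q → ℝ[X]) × ((Fin r → ℝ[X]) ⧸ N)) ≃ₗ[ℝ[X]] (Fin r → ℝ[X]) :=
    LinearEquiv.ofBijective φ ⟨hφinj, hφsurj⟩ with he
  -- bases
  set bN := Module.Free.chooseBasis ℝ[X] ((Fin r → ℝ[X]) ⧸ N) with hbN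
  set b := ((Pi.basisFun ℝ[X] (Fin q)).prod bN).map e with hb
  set ι := b.indexEquiv (Pi.basisFun ℝ[X] (Fin r)) with hι
  set b' := b.reindex ι with hb'
  set P := (Pi.basisFun ℝ[X] (Fin r)).toMatrix ⇑b' with hP
  haveI hPinv : Invertible P := (Pi.basisFun ℝ[X] (Fin r)).invertibleToMatrix b'
  have hPcol : ∀ i k, P i k = b' k i := by
    intro i k
    rw [hP, Module.Basis.toMatrix_apply, Pi.basisFun_repr]
  have hcolV : ∀ (j : Fin q) (i : Fin r), P i (ι (Sum.inl j)) = V i j := by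
    intro j i
    rw [hPcol]
    rw [hb', Module.Basis.reindex_apply, Equiv.symm_apply_apply, hb, Module.Basis.map_apply,
      Module.Basis.prod_apply]
    simp only [Sum.elim_inl, Function.comp_apply, LinearMap.inl_apply]
    show e ((Pi.basisFun ℝ[X] (Fin q)) j, 0) i = V i j
    have he2 : e ((Pi.basisFun ℝ[X] (Fin q)) j, 0) = f ((Pi.basisFun ℝ[X] (Fin q)) j) := by
      show φ ((Pi.basisFun ℝ[X] (Fin q)) j, 0) = f ((Pi.basisFun ℝ[X] (Fin q)) j)
      simp [hφ]
    rw [he2]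
    simp [hf, Pi.basisFun_apply, Matrix.mulVec_single]
  -- selector matrix
  set S : Matrix (Fin r) (Fin q) ℝ[X] :=
    Matrix.of (fun k j => if k = ι (Sum.inl j) then 1 else 0) with hS
  have hPS : P * S = V := by
    ext i j
    rw [Matrix.mul_apply]
    rw [Finset.sum_eq_single (ι (Sum.inl j))]
    · simp [hS, hcolV j i]
    · intro k _ hk; simp [hS, hk]
    · intro h; exact absurd (Finset.mem_univ _) h
  have hSV : ⅟P * V = S := by
    rw [← hPS, ← Matrix.mul_assoc, invOf_mul_self, Matrix.one_mul]
  refine ⟨P.map (fun p => Polynomial.C (p.eval 0)) * ⅟P, ?_, ?_⟩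
  · -- determinant is 1
    have hu : IsUnit P.det := Matrix.isUnit_det_of_invertible P
    obtain ⟨a, _, ha⟩ := Polynomial.isUnit_iff.mp hu
    have hmapdet : (P.map (fun p => Polynomial.C (p.eval 0))).det = P.det := by
      have hrd := RingHom.map_det ((Polynomial.C : ℝ →+* ℝ[X]).comp (Polynomial.evalRingHom 0)) P
      rw [RingHom.mapMatrix_apply] at hrd
      have heq : P.map ⇑((Polynomial.C : ℝ →+* ℝ[X]).comp (Polynomial.evalRingHom 0)) =
          P.map (fun p => Polynomial.C (p.eval 0)) := rfl
      rw [heq] at hrd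
      rw [← hrd, ← ha]
      simp
    have hdet : (P.map (fun p => Polynomial.C (p.eval 0)) * ⅟P).det = 1 := by
      rw [Matrix.det_mul, hmapdet, ← Matrix.det_mul, mul_invOf_self, Matrix.det_one]
    intro z h
    rw [hdet] at h
    simp at h
  · rw [Matrix.mul_assoc, hSV]
    ext i j
    rw [Matrix.mul_apply]
    rw [Finset.sum_eq_single (ι (Sum.inl j))]
    · simp [hS, Matrix.map_apply, hcolV j i]
    · intro k _ hk; simp [hS, hk]
    · intro h; exact absurd (Finset.mem_univ _) h
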